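/- Assume in addition that σ_n = T almost surely for every n ∈ ℕ ∪ {∞}. Then sup_{t ∈ [0,T]} ‖X_n(t) − X_∞(t)‖ → 0 in probability as n → ∞ (i.e., X_n → X_∞ in L⁰(Ω; C([0,T]; E))). -/

import Mathlib

open MeasureTheory Filter Set

theorem stmt_7
    {Ω : Type*} [MeasurableSpace Ω] (P : Measure Ω) [IsProbabilityMeasure P]
    {E : Type*} [NormedAddCommGroup E] [NormedSpace ℝ E] [CompleteSpace E]
    [MeasurableSpace E] [BorelSpace E]
    (T : ℝ) (hT : 0 < T)
    -- the explosion times σ_n (n ∈ ℕ) and σ_∞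
    (σ : ℕ → Ω → ℝ) (σi : Ω → ℝ)
    (hσmeas : ∀ n, Measurable (σ n)) (hσimeas : Measurable σi)
    (hσmem : ∀ n ω, σ n ω ∈ Set.Ioc 0 T) (hσimem : ∀ ω, σi ω ∈ Set.Ioc 0 T)
    -- the processes X_n (n ∈ ℕ) and X_∞, jointly measurable
    (X : ℕ → ℝ → Ω → E) (Xi : ℝ → Ω → E)
    (hXmeas : ∀ n, Measurable fun p : ℝ × Ω => X n p.1 p.2)
    (hXimeas : Measurable fun p : ℝ × Ω => Xi p.1 p.2)
    -- path continuity on [0, σ_n(ω)), and on [0,T] if σ_n(ω) = T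
    (hXcont : ∀ n ω, ContinuousOn (fun t => X n t ω) (Set.Ico 0 (σ n ω)))
    (hXcontT : ∀ n ω, σ n ω = T → ContinuousOn (fun t => X n t ω) (Set.Icc 0 T))
    (hXicont : ∀ ω, ContinuousOn (fun t => Xi t ω) (Set.Ico 0 (σi ω)))
    (hXicontT : ∀ ω, σi ω = T → ContinuousOn (fun t => Xi t ω) (Set.Icc 0 T))
    -- σ_n is an explosion time: on {σ_n < T}, limsup_{t ↑ σ_n} ‖X_n(t)‖ = ∞
    (hexpl : ∀ n ω, σ n ω < T →
      ∀ M : ℝ, ∃ᶠ t in nhdsWithin (σ n ω) (Set.Iio (σ n ω)), M < ‖X n t ω‖)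
    (hexpli : ∀ ω, σi ω < T →
      ∀ M : ℝ, ∃ᶠ t in nhdsWithin (σi ω) (Set.Iio (σi ω)), M < ‖Xi t ω‖)
    -- the stopping times ρ_n^{(r)} = inf { t ∈ (0, σ_n) : ‖X_n(t)‖ > r }, inf ∅ := T
    (ρ : ℕ → ℝ → Ω → ℝ) (ρi : ℝ → Ω → ℝ)
    (hρ : ∀ n r ω, ρ n r ω = sInf ({t : ℝ | t ∈ Set.Ioo 0 (σ n ω) ∧ r < ‖X n t ω‖} ∪ {T}))
    (hρi : ∀ r ω, ρi r ω = sInf ({t : ℝ | t ∈ Set.Ioo 0 (σi ω) ∧ r < ‖Xi t ω‖} ∪ {T}))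
    -- the globally defined processes X_n^{(r)} (denoted Y n r) and X_∞^{(r)} (denoted Yi r)
    (Y : ℕ → ℝ → ℝ → Ω → E) (Yi : ℝ → ℝ → Ω → E)
    (hYmeas : ∀ n r, Measurable fun p : ℝ × Ω => Y n r p.1 p.2)
    (hYimeas : ∀ r, Measurable fun p : ℝ × Ω => Yi r p.1 p.2)
    (hYcont : ∀ n r ω, Continuous fun t => Y n r t ω)
    (hYicont : ∀ r ω, Continuous fun t => Yi r t ω)
    -- assumption (a)
    (ha : ∀ n r, 0 < r → ∀ᵐ ω ∂P, ∀ t ∈ Set.Icc 0 (ρ n r ω), Y n r t ω = X n t ω)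
    (hai : ∀ r, 0 < r → ∀ᵐ ω ∂P, ∀ t ∈ Set.Icc 0 (ρi r ω), Yi r t ω = Xi t ω)
    -- assumption (b): X_n^{(r)} → X_∞^{(r)} in L⁰(Ω; C([0,T]; E))
    (hb : ∀ r, 0 < r → TendstoInMeasure P
      (fun n ω => ⨆ t : Set.Icc (0:ℝ) T, ‖Y n r (t : ℝ) ω - Yi r (t : ℝ) ω‖)
      atTop (fun _ => (0 : ℝ)))
    -- additionally: σ_n = T almost surely for all n ∈ ℕ ∪ {{∞}}
    (hσT : ∀ n, ∀ᵐ ω ∂P, σ n ω = T) (hσiT : ∀ᵐ ω ∂P, σi ω = T) :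
    TendstoInMeasure P
      (fun n ω => ⨆ t : Set.Icc (0:ℝ) T, ‖X n (t : ℝ) ω - Xi (t : ℝ) ω‖)
      atTop (fun _ => (0 : ℝ)) := by
  rw [tendstoInMeasure_iff_dist]
  intro ε hε
  rw [ENNReal.tendsto_atTop_zero]
  intro δ hδ
  have hδ2 : (0:ENNReal) < δ / 2 := ENNReal.half_pos hδ.ne'
  set ε' : ℝ := min ε 1 with hε'def
  have hε' : 0 < ε' := lt_min hε one_pos
  have hε'le : ε' ≤ ε := min_le_left _ _
  have hε'1 : ε' ≤ 1 := min_le_right _ _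
  -- the measurable approximating sets F k
  set F : ℕ → Set Ω := fun k =>
    ⋃ q : ℚ, {ω | (q:ℝ) ∈ Set.Ioo 0 T ∧ (k:ℝ) < ‖Xi (q:ℝ) ω‖} with hFdef
  have hXiqmeas : ∀ q : ℚ, Measurable fun ω => Xi (q:ℝ) ω :=
    fun q => hXimeas.comp (measurable_const.prodMk measurable_id)
  have hFmeas : ∀ k, MeasurableSet (F k) := by
    intro k
    refine MeasurableSet.iUnion fun q => ?_
    rw [Set.setOf_and]
    exact (MeasurableSet.const _).inter
      (measurableSet_lt measurable_const (hXiqmeas q).norm)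
  have hFanti : Antitone F := by
    intro j k hjk ω hω
    obtain ⟨s, ⟨q, rfl⟩, hq1, hq2⟩ := hω
    exact Set.mem_iUnion.mpr ⟨q, hq1, lt_of_le_of_lt (by exact_mod_cast hjk) hq2⟩
  have hInull : P (⋂ k, F k) = 0 := by
    refine measure_mono_null ?_ (ae_iff.mp hσiT)
    intro ω hω
    simp only [Set.mem_iInter] at hω
    simp only [Set.mem_setOf_eq]
    intro hσ
    obtain ⟨C, hC⟩ := isCompact_Icc.exists_bound_of_continuousOn (hXicontT ω hσ)
    obtain ⟨k, hk⟩ := exists_nat_gt C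
    obtain ⟨q, hq1, hq2⟩ := Set.mem_iUnion.mp (hω k)
    exact absurd (hq2.trans_le (hC q ⟨hq1.1.le, hq1.2.le⟩)) (not_lt.mpr hk.le)
  have hFt : Tendsto (fun k => P (F k)) atTop (nhds 0) := by
    rw [← hInull]
    exact tendsto_measure_iInter_atTop (fun k => (hFmeas k).nullMeasurableSet) hFanti
      ⟨0, measure_ne_top P _⟩
  obtain ⟨R, hR⟩ := ENNReal.tendsto_atTop_zero.mp hFt (δ/2) hδ2
  have hFR : P (F R) ≤ δ/2 := hR R le_rfl
  set r : ℝ := (R:ℝ) + 2 with hrdef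
  have hr : 0 < r := by positivity
  obtain ⟨N, hN⟩ := ENNReal.tendsto_atTop_zero.mp (tendstoInMeasure_iff_dist.mp (hb r hr) ε' hε') (δ/2) hδ2
  refine ⟨N, fun n hn => ?_⟩
  have hae : P {ω | ¬ (σ n ω = T ∧ σi ω = T ∧
      (∀ t ∈ Set.Icc 0 (ρ n r ω), Y n r t ω = X n t ω) ∧
      (∀ t ∈ Set.Icc 0 (ρi r ω), Yi r t ω = Xi t ω))} = 0 :=
    ae_iff.mp ((hσT n).and (hσiT.and ((ha n r hr).and (hai r hr))))
  have hsub : {ω | ε ≤ dist (⨆ t : Set.Icc (0:ℝ) T, ‖X n (t:ℝ) ω - Xi (t:ℝ) ω‖) 0} ⊆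
      {ω | ε' ≤ dist (⨆ t : Set.Icc (0:ℝ) T, ‖Y n r (t:ℝ) ω - Yi r (t:ℝ) ω‖) 0} ∪
      (F R ∪ {ω | ¬ (σ n ω = T ∧ σi ω = T ∧
        (∀ t ∈ Set.Icc 0 (ρ n r ω), Y n r t ω = X n t ω) ∧
        (∀ t ∈ Set.Icc 0 (ρi r ω), Yi r t ω = Xi t ω))}) := by
    intro ω hω
    rw [Set.mem_union, Set.mem_union]
    by_contra hcon
    rw [not_or, not_or] at hcon
    obtain ⟨h1, h2, h3⟩ := hcon
    rw [Set.mem_setOf_eq, not_le] at h1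
    obtain ⟨hσn, hσi, han, hain⟩ :=
      not_not.mp (h3 : ¬ ω ∈ {ω | ¬ (σ n ω = T ∧ σi ω = T ∧
        (∀ t ∈ Set.Icc 0 (ρ n r ω), Y n r t ω = X n t ω) ∧
        (∀ t ∈ Set.Icc 0 (ρi r ω), Yi r t ω = Xi t ω))})
    rw [Set.mem_setOf_eq] at hω
    -- sup of Y-difference is small
    have hbdd : BddAbove (Set.range fun t : Set.Icc (0:ℝ) T =>
        ‖Y n r (t:ℝ) ω - Yi r (t:ℝ) ω‖) := by
      obtain ⟨C, hC⟩ := isCompact_Icc.exists_bound_of_continuousOn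
        (((hYcont n r ω).sub (hYicont r ω)).continuousOn :
          ContinuousOn (fun t => Y n r t ω - Yi r t ω) (Set.Icc 0 T))
      exact ⟨C, by rintro x ⟨t, rfl⟩; exact hC t t.2⟩
    have h0Y : (0:ℝ) ≤ ⨆ t : Set.Icc (0:ℝ) T, ‖Y n r (t:ℝ) ω - Yi r (t:ℝ) ω‖ :=
      Real.iSup_nonneg fun t => norm_nonneg _
    have hsupY : (⨆ t : Set.Icc (0:ℝ) T, ‖Y n r (t:ℝ) ω - Yi r (t:ℝ) ω‖) < ε' := by
      rwa [Real.dist_eq, sub_zero, abs_of_nonneg h0Y] at h1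
    -- bddBelow facts
    have hbbi : BddBelow ({t : ℝ | t ∈ Set.Ioo 0 (σi ω) ∧ (R:ℝ) < ‖Xi t ω‖} ∪ {T}) := by
      refine ⟨0, fun x hx => ?_⟩
      rcases hx with hx | hx
      · exact hx.1.1.le
      · rw [Set.mem_singleton_iff] at hx; rw [hx]; exact hT.le
    have hbbi' : BddBelow ({t : ℝ | t ∈ Set.Ioo 0 (σi ω) ∧ r < ‖Xi t ω‖} ∪ {T}) := by
      refine ⟨0, fun x hx => ?_⟩
      rcases hx with hx | hx
      · exact hx.1.1.le
      · rw [Set.mem_singleton_iff] at hx; rw [hx]; exact hT.le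
    have hbbn : BddBelow ({t : ℝ | t ∈ Set.Ioo 0 (σ n ω) ∧ r < ‖X n t ω‖} ∪ {T}) := by
      refine ⟨0, fun x hx => ?_⟩
      rcases hx with hx | hx
      · exact hx.1.1.le
      · rw [Set.mem_singleton_iff] at hx; rw [hx]; exact hT.le
    -- Step 1 : the R-stopping set has infimum T
    have hsR : sInf ({t : ℝ | t ∈ Set.Ioo 0 (σi ω) ∧ (R:ℝ) < ‖Xi t ω‖} ∪ {T}) = T := by
      refine le_antisymm (csInf_le hbbi (Set.mem_union_right _ rfl)) ?_
      refine le_csInf ⟨T, Set.mem_union_right _ rfl⟩ fun x hx => ?_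
      rcases hx with ⟨hx1, hxR⟩ | hx
      · exfalso
        apply h2
        have hx0 : 0 < x := hx1.1
        have hxT : x < T := hσi ▸ hx1.2
        have hcx : ContinuousWithinAt (fun t => Xi t ω) (Set.Icc 0 T) x :=
          (hXicontT ω hσi) x ⟨hx0.le, hxT.le⟩
        have hmem : {y : E | (R:ℝ) < ‖y‖} ∈ nhds (Xi x ω) :=
          (isOpen_lt continuous_const continuous_norm).mem_nhds hxR
        obtain ⟨η, hη, hball⟩ := Metric.mem_nhdsWithin_iff.mp (hcx hmem)
        have hmm : max (x - η) 0 < min (x + η) T :=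
          max_lt (lt_min (by linarith) (by linarith)) (lt_min (by linarith) hT)
        obtain ⟨q, hq1, hq2⟩ := exists_rat_btwn hmm
        have hq0 : (0:ℝ) < q := lt_of_le_of_lt (le_max_right _ _) hq1
        have hqT : (q:ℝ) < T := lt_of_lt_of_le hq2 (min_le_right _ _)
        have hqball : (q:ℝ) ∈ Metric.ball x η ∩ Set.Icc 0 T := by
          constructor
          · rw [Metric.mem_ball, Real.dist_eq, abs_sub_lt_iff]
            constructor
            · linarith [hq2.trans_le (min_le_left _ _)]
            · linarith [lt_of_le_of_lt (le_max_left _ _) hq1]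
          · exact ⟨hq0.le, hqT.le⟩
        exact Set.mem_iUnion.mpr ⟨q, ⟨hq0, hqT⟩, hball hqball⟩
      · rw [Set.mem_singleton_iff] at hx; rw [hx]
    -- Step 2 : ρi r ω = T
    have hρir : ρi r ω = T := by
      rw [hρi]
      refine le_antisymm (csInf_le hbbi' (Set.mem_union_right _ rfl)) ?_
      refine hsR.symm.trans_le (csInf_le_csInf hbbi ⟨T, Set.mem_union_right _ rfl⟩ ?_)
      intro x hx
      rcases hx with ⟨hx1, hx2⟩ | hx
      · exact Or.inl ⟨hx1, lt_of_le_of_lt (by rw [hrdef]; linarith) hx2⟩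
      · exact Or.inr hx
    -- Step 3 : ρ n r ω = T
    have hρn : ρ n r ω = T := by
      by_contra hne
      have hpT : ρ n r ω ≤ T := by
        rw [hρ]; exact csInf_le hbbn (Set.mem_union_right _ rfl)
      have hlt : ρ n r ω < T := lt_of_le_of_ne hpT hne
      have hp0 : 0 ≤ ρ n r ω := by
        rw [hρ]
        refine le_csInf ⟨T, Set.mem_union_right _ rfl⟩ fun x hx => ?_
        rcases hx with hx | hx
        · exact hx.1.1.le
        · rw [Set.mem_singleton_iff] at hx; rw [hx]; exact hT.le
      set p := ρ n r ω with hpdef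
      have hXp : r ≤ ‖X n p ω‖ := by
        by_contra hXp
        push_neg at hXp
        have hcx : ContinuousWithinAt (fun t => X n t ω) (Set.Icc 0 T) p :=
          (hXcontT n ω hσn) p ⟨hp0, hpT⟩
        have hmem : {y : E | ‖y‖ < r} ∈ nhds (X n p ω) :=
          (isOpen_lt continuous_norm continuous_const).mem_nhds hXp
        obtain ⟨η, hη, hball⟩ := Metric.mem_nhdsWithin_iff.mp (hcx hmem)
        have hlow : min (p + η) T ≤ ρ n r ω := by
          rw [hρ]
          refine le_csInf ⟨T, Set.mem_union_right _ rfl⟩ fun x hx => ?_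
          rcases hx with ⟨hx1, hx2⟩ | hx
          · by_contra hxlt
            push_neg at hxlt
            have hpx : p ≤ x := by
              rw [hpdef, hρ]
              exact csInf_le hbbn (Set.mem_union_left _ ⟨hx1, hx2⟩)
            have hxT : x < T := lt_of_lt_of_le hxlt (min_le_right _ _)
            have hxp : x < p + η := lt_of_lt_of_le hxlt (min_le_left _ _)
            have hxball : x ∈ Metric.ball p η ∩ Set.Icc 0 T := by
              constructor
              · rw [Metric.mem_ball, Real.dist_eq, abs_sub_lt_iff]
                constructor <;> linarith
              · exact ⟨hx1.1.le, hxT.le⟩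
            exact absurd hx2 (not_lt.mpr (hball hxball).le)
          · rw [Set.mem_singleton_iff] at hx; rw [hx]; exact min_le_right _ _
        have hplt : p < min (p + η) T := lt_min (by linarith) hlt
        exact absurd hlow (not_le.mpr hplt)
      have hYp : Y n r p ω = X n p ω := han p ⟨hp0, le_refl p⟩
      have hterm : ‖Y n r p ω - Yi r p ω‖ < ε' :=
        lt_of_le_of_lt (le_ciSup hbdd ⟨p, hp0, hpT⟩) hsupY
      have hYip : (R:ℝ) < ‖Yi r p ω‖ := by
        have h2' : ‖Y n r p ω‖ - ‖Yi r p ω‖ ≤ ‖Y n r p ω - Yi r p ω‖ :=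
          norm_sub_norm_le _ _
        have h1' : r ≤ ‖Y n r p ω‖ := by rw [hYp]; exact hXp
        have hrr : r = (R:ℝ) + 2 := hrdef
        linarith
      have hXip : (R:ℝ) < ‖Xi p ω‖ := by
        have hh : Yi r p ω = Xi p ω := hain p ⟨hp0, by rw [hρir]; exact hpT⟩
        rwa [hh] at hYip
      have hcx : ContinuousWithinAt (fun t => Xi t ω) (Set.Icc 0 T) p :=
        (hXicontT ω hσi) p ⟨hp0, hpT⟩
      have hmem : {y : E | (R:ℝ) < ‖y‖} ∈ nhds (Xi p ω) :=
        (isOpen_lt continuous_const continuous_norm).mem_nhds hXip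
      obtain ⟨η, hη, hball⟩ := Metric.mem_nhdsWithin_iff.mp (hcx hmem)
      obtain ⟨t0, ht0⟩ : (Set.Ioo p (min (p + η) T)).Nonempty :=
        Set.nonempty_Ioo.mpr (lt_min (by linarith) hlt)
      have ht0T : t0 < T := lt_of_lt_of_le ht0.2 (min_le_right _ _)
      have ht00 : 0 < t0 := lt_of_le_of_lt hp0 ht0.1
      have ht0p : t0 < p + η := lt_of_lt_of_le ht0.2 (min_le_left _ _)
      have hXt0 : (R:ℝ) < ‖Xi t0 ω‖ := by
        refine hball ⟨?_, ⟨ht00.le, ht0T.le⟩⟩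
        rw [Metric.mem_ball, Real.dist_eq, abs_sub_lt_iff]
        constructor <;> linarith [ht0.1]
      have hle : sInf ({t : ℝ | t ∈ Set.Ioo 0 (σi ω) ∧ (R:ℝ) < ‖Xi t ω‖} ∪ {T}) ≤ t0 :=
        csInf_le hbbi (Set.mem_union_left _ ⟨⟨ht00, by rw [hσi]; exact ht0T⟩, hXt0⟩)
      rw [hsR] at hle
      exact absurd hle (not_le.mpr ht0T)
    -- conclusion : the two suprema coincide
    have hfin : (⨆ t : Set.Icc (0:ℝ) T, ‖X n (t:ℝ) ω - Xi (t:ℝ) ω‖) =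
        ⨆ t : Set.Icc (0:ℝ) T, ‖Y n r (t:ℝ) ω - Yi r (t:ℝ) ω‖ := by
      refine iSup_congr fun t => ?_
      rw [han t (by rw [hρn]; exact t.2), hain t (by rw [hρir]; exact t.2)]
    have h0X : (0:ℝ) ≤ ⨆ t : Set.Icc (0:ℝ) T, ‖X n (t:ℝ) ω - Xi (t:ℝ) ω‖ :=
      Real.iSup_nonneg fun t => norm_nonneg _
    rw [Real.dist_eq, sub_zero, abs_of_nonneg h0X, hfin] at hω
    exact absurd hω (not_le.mpr (lt_of_lt_of_le hsupY hε'le))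
  calc P {ω | ε ≤ dist (⨆ t : Set.Icc (0:ℝ) T, ‖X n (t:ℝ) ω - Xi (t:ℝ) ω‖) 0}
      ≤ P ({ω | ε' ≤ dist (⨆ t : Set.Icc (0:ℝ) T, ‖Y n r (t:ℝ) ω - Yi r (t:ℝ) ω‖) 0} ∪
        (F R ∪ {ω | ¬ (σ n ω = T ∧ σi ω = T ∧
          (∀ t ∈ Set.Icc 0 (ρ n r ω), Y n r t ω = X n t ω) ∧
          (∀ t ∈ Set.Icc 0 (ρi r ω), Yi r t ω = Xi t ω))})) := measure_mono hsub
    _ ≤ P {ω | ε' ≤ dist (⨆ t : Set.Icc (0:ℝ) T, ‖Y n r (t:ℝ) ω - Yi r (t:ℝ) ω‖) 0} +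
        P (F R ∪ {ω | ¬ (σ n ω = T ∧ σi ω = T ∧
          (∀ t ∈ Set.Icc 0 (ρ n r ω), Y n r t ω = X n t ω) ∧
          (∀ t ∈ Set.Icc 0 (ρi r ω), Yi r t ω = Xi t ω))}) := measure_union_le _ _
    _ ≤ P {ω | ε' ≤ dist (⨆ t : Set.Icc (0:ℝ) T, ‖Y n r (t:ℝ) ω - Yi r (t:ℝ) ω‖) 0} +
        (P (F R) + P {ω | ¬ (σ n ω = T ∧ σi ω = T ∧
          (∀ t ∈ Set.Icc 0 (ρ n r ω), Y n r t ω = X n t ω) ∧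
          (∀ t ∈ Set.Icc 0 (ρi r ω), Yi r t ω = Xi t ω))}) :=
        add_le_add_right (measure_union_le _ _) _
    _ = P {ω | ε' ≤ dist (⨆ t : Set.Icc (0:ℝ) T, ‖Y n r (t:ℝ) ω - Yi r (t:ℝ) ω‖) 0} +
        P (F R) := by rw [hae, add_zero]
    _ ≤ δ/2 + δ/2 := add_le_add (hN n hn) hFR
    _ = δ := ENNReal.add_halves δ
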